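/- Let p ∈ ℂ*, m ∈ {0,1,2}, ζ = e^{2πi/3}. Let E be the 'Case 3' array: E(1,2,3)=1, E(1,3,2)=p, E(2,1,3)=(1/conj(p))·ζ^{-m}, E(2,3,1)=ζ^m, E(3,1,2)=|p|²·ζ^{-m}, E(3,2,1)=p·ζ^m. Let Ẽ be the array of SU_{p',m}(3) with p' = conj(p)·ζ^{-m}: Ẽ(1,2,3)=1, Ẽ(1,3,2)=p', Ẽ(2,1,3)=p'·ζ^{-m}, Ẽ(2,3,1)=|p'|²·ζ^m, Ẽ(3,1,2)=|p'|²·ζ^{-m}, Ẽ(3,2,1)=|p'|²·p'·ζ^m. Then there exist a permutation σ ∈ S₃ and a constant c ∈ ℂ* such that E(σ(i₁),σ(i₂),σ(i₃)) = c·Ẽ(i₁,i₂,i₃) for all (i₁,i₂,i₃) ∈ S₃. -/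

import Mathlib

noncomputable def zeta3 : ℂ := Complex.exp (2 * Real.pi * Complex.I / 3)

lemma zeta3_ne_zero : zeta3 ≠ 0 := Complex.exp_ne_zero _

lemma zeta3_cube : zeta3 ^ (3:ℕ) = 1 := by
  rw [zeta3, ← Complex.exp_nat_mul]
  rw [show ((3:ℕ):ℂ) * (2 * Real.pi * Complex.I / 3) = 2 * Real.pi * Complex.I by push_cast; ring]
  exact Complex.exp_two_pi_mul_I

lemma zeta3_abs : ‖zeta3‖ = 1 := by
  rw [zeta3, Complex.norm_exp]
  norm_num [Complex.div_re]

/-- The 'Case 3' array of Lemma 8.1 (indices `0,1,2` stand for `1,2,3`). -/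
noncomputable def Case3Arr (p : ℂ) (m : ℕ) : Fin 3 → Fin 3 → Fin 3 → ℂ := fun a b c =>
  if (a, b, c) = ((0 : Fin 3), (1 : Fin 3), (2 : Fin 3)) then 1
  else if (a, b, c) = ((0 : Fin 3), (2 : Fin 3), (1 : Fin 3)) then p
  else if (a, b, c) = ((1 : Fin 3), (0 : Fin 3), (2 : Fin 3)) then
    (1 / (starRingEnd ℂ) p) * zeta3 ^ (-(m : ℤ))
  else if (a, b, c) = ((1 : Fin 3), (2 : Fin 3), (0 : Fin 3)) then zeta3 ^ (m : ℤ)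
  else if (a, b, c) = ((2 : Fin 3), (0 : Fin 3), (1 : Fin 3)) then
    (‖p‖ : ℂ) ^ 2 * zeta3 ^ (-(m : ℤ))
  else if (a, b, c) = ((2 : Fin 3), (1 : Fin 3), (0 : Fin 3)) then p * zeta3 ^ (m : ℤ)
  else 0

/-- The array defining `SU_{q,m}(3)`. -/
noncomputable def SuArr (q : ℂ) (m : ℕ) : Fin 3 → Fin 3 → Fin 3 → ℂ := fun a b c =>
  if (a, b, c) = ((0 : Fin 3), (1 : Fin 3), (2 : Fin 3)) then 1
  else if (a, b, c) = ((0 : Fin 3), (2 : Fin 3), (1 : Fin 3)) then q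
  else if (a, b, c) = ((1 : Fin 3), (0 : Fin 3), (2 : Fin 3)) then q * zeta3 ^ (-(m : ℤ))
  else if (a, b, c) = ((1 : Fin 3), (2 : Fin 3), (0 : Fin 3)) then
    (‖q‖ : ℂ) ^ 2 * zeta3 ^ (m : ℤ)
  else if (a, b, c) = ((2 : Fin 3), (0 : Fin 3), (1 : Fin 3)) then
    (‖q‖ : ℂ) ^ 2 * zeta3 ^ (-(m : ℤ))
  else if (a, b, c) = ((2 : Fin 3), (1 : Fin 3), (0 : Fin 3)) then
    (‖q‖ : ℂ) ^ 2 * q * zeta3 ^ (m : ℤ)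
  else 0

theorem stmt15 (p : ℂ) (hp : p ≠ 0) (m : ℕ) (hm : m < 3) :
    ∃ (σ : Equiv.Perm (Fin 3)) (c : ℂ), c ≠ 0 ∧
      ∀ i₁ i₂ i₃ : Fin 3, i₁ ≠ i₂ → i₂ ≠ i₃ → i₁ ≠ i₃ →
        Case3Arr p m (σ i₁) (σ i₂) (σ i₃) =
          c * SuArr ((starRingEnd ℂ) p * zeta3 ^ (-(m : ℤ))) m i₁ i₂ i₃ := by
  have hz : zeta3 ≠ 0 := zeta3_ne_zero
  have hpc : (starRingEnd ℂ) p ≠ 0 := by simpa using hp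
  set a : ℂ := zeta3 ^ (m : ℤ) with ha
  have ha0 : a ≠ 0 := zpow_ne_zero _ hz
  have h3 : zeta3 ^ (3*m) = 1 := by rw [pow_mul, zeta3_cube, one_pow]
  have ha' : a = zeta3 ^ m := by rw [ha, zpow_natCast]
  have ha3 : a ^ 3 = 1 := by rw [ha', ← pow_mul, mul_comm]; exact h3
  have hb : zeta3 ^ (-(m : ℤ)) = a ^ 2 := by
    have h1 : a * zeta3 ^ (-(m : ℤ)) = 1 := by
      rw [ha, ← zpow_add₀ hz]; simp
    have h2 : a * a ^ 2 = 1 := by rw [← pow_succ']; exact ha3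
    exact mul_left_cancel₀ ha0 (h1.trans h2.symm)
  have habs : ((‖((starRingEnd ℂ) p * zeta3 ^ (-(m:ℤ)))‖) : ℂ)
      = (‖p‖ : ℂ) := by
    rw [norm_mul, Complex.norm_conj, norm_zpow, zeta3_abs]
    simp
  have hpp : ((‖p‖ : ℂ)) ^ 2 = p * (starRingEnd ℂ) p := by
    rw [show ((‖p‖ : ℂ)) ^ 2 = (((‖p‖)^2 : ℝ) : ℂ) by push_cast; ring,
      Complex.sq_norm, ← Complex.mul_conj]
  refine ⟨Equiv.swap 0 1, (1 / (starRingEnd ℂ) p) * zeta3 ^ (-(m:ℤ)), by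
    simp [hpc, zpow_ne_zero, hz], ?_⟩
  intro i₁ i₂ i₃ h12 h23 h13
  fin_cases i₁ <;> fin_cases i₂ <;> fin_cases i₃ <;>
    simp_all [Case3Arr, SuArr, Equiv.swap_apply_def, map_mul, map_zpow₀,
      Complex.norm_conj, zeta3_abs, hb, hpp] <;>
    field_simp [show ((starRingEnd ℂ) p) ≠ 0 from by simpa using hp] <;>
    first
    | linear_combination (-(zeta3^m * (starRingEnd ℂ) p)) * h3
    | linear_combination (-((starRingEnd ℂ) p) * (1 + zeta3^(3*m))) * h3
    | linear_combination (-(p * (starRingEnd ℂ) p)) * h3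
    | linear_combination (-(p * zeta3^m * (starRingEnd ℂ) p)) * h3
    | linear_combination (-(p * (starRingEnd ℂ) p^2 * zeta3^(2*m))) * h3
    | linear_combination (p * (starRingEnd ℂ) p^2 * zeta3^(2*m) - 1) * h3
    | linear_combination (p * (starRingEnd ℂ) p^2 * zeta3^(2*m) - (1 + zeta3^(3*m))) * h3
    | linear_combination (-1 : ℂ) * h3
    | linear_combination (-(1 + zeta3^(3*m))) * h3
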